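/- Let p₁, p₂, p₃ be affinely independent points of the Euclidean plane E₂, let T be their convex hull, and let χ > 0. Let P be a point of T with dist(P, x) ≥ χ for every x in the frontier ∂T of T. Let g : E₂ → E₂ be a map that is continuous on T and satisfies dist(x, g(x)) < χ for every x ∈ T. Then P belongs to the image g(T). (This is the topological core of the proof of Lemma 2: the point P = p(D⁻) lies in g_n(p(T_i)) = p(f_n(T_i)), proved by a homotopy/contraction argument.) -/

import Mathlib

open Set Metric Complex

/-- A continuous function on `[0,1]` all of whose values have `exp = 1` has equal endpoints. -/
lemma const_of_exp_eq_one (f : ℝ → ℂ) (hf : ContinuousOn f (Set.Icc 0 1))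
    (h : ∀ t ∈ Set.Icc (0:ℝ) 1, Complex.exp (f t) = 1) : f 1 = f 0 := by
  have h0 : (0:ℝ) ∈ Set.Icc (0:ℝ) 1 := by norm_num
  have h1 : (1:ℝ) ∈ Set.Icc (0:ℝ) 1 := by norm_num
  choose k hk using fun t (ht : t ∈ Set.Icc (0:ℝ) 1) => Complex.exp_eq_one_iff.1 (h t ht)
  set φ : ℝ → ℝ := fun t => (f t).im / (2 * Real.pi) with hφ
  have hπ : (0:ℝ) < 2 * Real.pi := by positivity
  have hφk : ∀ t (ht : t ∈ Set.Icc (0:ℝ) 1), φ t = (k t ht : ℝ) := by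
    intro t ht
    have := hk t ht
    have him : (f t).im = (k t ht : ℝ) * (2 * Real.pi) := by
      rw [this]; simp [Complex.mul_im]
    rw [hφ]; show (f t).im / (2 * Real.pi) = _
    rw [him, mul_div_assoc, div_self hπ.ne', mul_one]
  have hφc : ContinuousOn φ (Set.Icc 0 1) :=
    ((Complex.continuous_im.comp_continuousOn hf).div_const _)
  have hkey : φ 1 = φ 0 := by
    by_contra hne
    rcases lt_or_gt_of_ne hne with hlt | hlt
    · -- φ 1 < φ 0, pick value k 1 + 1/2
      have hsub := intermediate_value_Icc' (zero_le_one) hφc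
      have hv : (k 1 h1 : ℝ) + 1/2 ∈ Set.Icc (φ 1) (φ 0) := by
        constructor
        · rw [hφk 1 h1]; linarith
        · rw [hφk 0 h0]; rw [hφk 1 h1, hφk 0 h0] at hlt
          have h2 : k 1 h1 + 1 ≤ k 0 h0 := by exact_mod_cast hlt
          have h3 : ((k 1 h1 : ℝ)) + 1 ≤ ((k 0 h0 : ℝ)) := by exact_mod_cast h2
          linarith
      obtain ⟨t, ht, hval⟩ := hsub hv
      rw [hφk t ht] at hval
      have : 2 * (k t ht) = 2 * (k 1 h1) + 1 := by
        have : (2 * (k t ht) : ℝ) = 2 * (k 1 h1) + 1 := by push_cast at hval ⊢; linarith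
        exact_mod_cast this
      omega
    · have hsub := intermediate_value_Icc (zero_le_one) hφc
      have hv : (k 0 h0 : ℝ) + 1/2 ∈ Set.Icc (φ 0) (φ 1) := by
        constructor
        · rw [hφk 0 h0]; linarith
        · rw [hφk 1 h1]; rw [hφk 1 h1, hφk 0 h0] at hlt
          have h2 : k 0 h0 + 1 ≤ k 1 h1 := by exact_mod_cast hlt
          have h3 : ((k 0 h0 : ℝ)) + 1 ≤ ((k 1 h1 : ℝ)) := by exact_mod_cast h2
          linarith
      obtain ⟨t, ht, hval⟩ := hsub hv
      rw [hφk t ht] at hval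
      have : 2 * (k t ht) = 2 * (k 0 h0) + 1 := by
        have : (2 * (k t ht) : ℝ) = 2 * (k 0 h0) + 1 := by push_cast at hval ⊢; linarith
        exact_mod_cast this
      omega
  -- conclude
  have e1 := hk 1 h1
  have e0 := hk 0 h0
  rw [e1, e0]
  have : (k 1 h1 : ℝ) = (k 0 h0 : ℝ) := by rw [← hφk 1 h1, ← hφk 0 h0, hkey]
  have : k 1 h1 = k 0 h0 := by exact_mod_cast this
  rw [this]

lemma exists_continuous_log (f : ℝ × ℝ → ℂ) (hf : ContinuousOn f (Set.Icc 0 1))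
    (h0 : ∀ p ∈ Set.Icc (0 : ℝ × ℝ) 1, f p ≠ 0) :
    ∃ L : ℝ × ℝ → ℂ, ContinuousOn L (Set.Icc 0 1) ∧
      ∀ p ∈ Set.Icc (0 : ℝ × ℝ) 1, Complex.exp (L p) = f p := by
  set S := Set.Icc (0 : ℝ × ℝ) 1 with hSdef
  have hS : IsCompact S := isCompact_Icc
  have h01 : (0 : ℝ × ℝ) ∈ S := Set.left_mem_Icc.2 ⟨zero_le_one, zero_le_one⟩
  -- minimum of the norm
  obtain ⟨x₀, hx₀S, hx₀⟩ := hS.exists_isMinOn ⟨0, h01⟩ (continuous_norm.comp_continuousOn hf)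
  rw [isMinOn_iff] at hx₀
  set m := ‖f x₀‖ with hm
  have hm0 : 0 < m := norm_pos_iff.2 (h0 x₀ hx₀S)
  -- uniform continuity
  have huc := hS.uniformContinuousOn_of_continuous hf
  rw [Metric.uniformContinuousOn_iff] at huc
  obtain ⟨δ, hδ0, hδ⟩ := huc m hm0
  obtain ⟨n, hn⟩ := exists_nat_one_div_lt hδ0
  set N : ℕ := n + 1 with hNdef
  have hN0 : (0:ℝ) < (N:ℝ) := by positivity
  -- scaling stays in the square
  have hmem : ∀ (a : ℝ), 0 ≤ a → a ≤ 1 → ∀ p ∈ S, a • p ∈ S := by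
    intro a ha0 ha1 p hp
    rw [hSdef, Set.mem_Icc, Prod.le_def, Prod.le_def] at hp ⊢
    simp only [Prod.smul_fst, Prod.smul_snd, smul_eq_mul, Prod.fst_zero, Prod.snd_zero,
      Prod.fst_one, Prod.snd_one] at hp ⊢
    obtain ⟨⟨a1, a2⟩, b1, b2⟩ := hp
    exact ⟨⟨by positivity, by positivity⟩, by nlinarith, by nlinarith⟩
  set q : ℝ × ℝ → ℕ → ℝ × ℝ := fun p j => ((j : ℝ) / N) • p with hq
  have hq01 : ∀ p ∈ S, ∀ j, j ≤ N → q p j ∈ S := by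
    intro p hp j hj
    exact hmem _ (by positivity) ((div_le_one hN0).2 (by exact_mod_cast hj)) p hp
  have hnorm1 : ∀ p ∈ S, ‖p‖ ≤ 1 := by
    intro p hp
    rw [hSdef, Set.mem_Icc, Prod.le_def, Prod.le_def] at hp
    simp only [Prod.fst_zero, Prod.snd_zero, Prod.fst_one, Prod.snd_one] at hp
    rw [Prod.norm_def]
    obtain ⟨⟨a1, a2⟩, b1, b2⟩ := hp
    simp only [Real.norm_eq_abs, sup_le_iff]
    constructor <;> rw [abs_le] <;> constructor <;> linarith
  have hstep : ∀ p ∈ S, ∀ j : ℕ, dist (q p (j+1)) (q p j) < δ := by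
    intro p hp j
    rw [dist_eq_norm, hq]
    have : (((j+1 : ℕ) : ℝ) / N) • p - (((j : ℕ) : ℝ) / N) • p = ((1:ℝ)/N) • p := by
      rw [← sub_smul]; congr 1; push_cast; ring
    rw [this, norm_smul]
    have h1 : ‖(1:ℝ)/N‖ = 1/N := by rw [Real.norm_eq_abs, abs_of_pos (by positivity)]
    rw [h1]
    calc 1/(N:ℝ) * ‖p‖ ≤ 1/N * 1 := by
          apply mul_le_mul_of_nonneg_left (hnorm1 p hp) (by positivity)
      _ = 1/(n+1 : ℝ) := by rw [hNdef]; push_cast; ring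
      _ < δ := hn
  -- consecutive ratios are close to 1
  have hmle : ∀ p ∈ S, m ≤ ‖f p‖ := fun p hp => hx₀ p hp
  have hratio : ∀ p ∈ S, ∀ j : ℕ, j < N →
      f (q p (j+1)) / f (q p j) ∈ Metric.ball (1:ℂ) 1 := by
    intro p hp j hj
    have hj1 : q p (j+1) ∈ S := hq01 p hp (j+1) hj
    have hj0 : q p j ∈ S := hq01 p hp j (le_of_lt hj)
    have hb : f (q p j) ≠ 0 := h0 _ hj0
    rw [Metric.mem_ball, dist_eq_norm]
    have : f (q p (j+1)) / f (q p j) - 1 = (f (q p (j+1)) - f (q p j)) / f (q p j) := by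
      field_simp
    rw [this, norm_div, div_lt_one (norm_pos_iff.2 hb)]
    calc ‖f (q p (j+1)) - f (q p j)‖ = dist (f (q p (j+1))) (f (q p j)) := (dist_eq_norm _ _).symm
      _ < m := hδ _ hj1 _ hj0 (hstep p hp j)
      _ ≤ ‖f (q p j)‖ := hmle _ hj0
  have hslit : Metric.ball (1:ℂ) 1 ⊆ Complex.slitPlane := by
    intro z hz
    rw [Metric.mem_ball, dist_eq_norm] at hz
    rw [Complex.mem_slitPlane_iff]
    left
    have h1 : |(z - 1).re| ≤ ‖z - 1‖ := Complex.abs_re_le_norm _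
    have h2 : (z - 1).re = z.re - 1 := by simp
    rw [h2] at h1
    have := abs_le.1 h1
    linarith [this.1]
  -- the logarithm
  set L : ℝ × ℝ → ℂ := fun p => Complex.log (f 0) +
      ∑ j ∈ Finset.range N, Complex.log (f (q p (j+1)) / f (q p j)) with hL
  refine ⟨L, ?_, ?_⟩
  · -- continuity
    apply continuousOn_const.add
    apply continuousOn_finset_sum
    intro j hj
    rw [Finset.mem_range] at hj
    have hc1 : ContinuousOn (fun p => f (q p (j+1))) S := by
      apply hf.comp (Continuous.continuousOn (by fun_prop))
      intro p hp; exact hq01 p hp (j+1) hj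
    have hc0 : ContinuousOn (fun p => f (q p j)) S := by
      apply hf.comp (Continuous.continuousOn (by fun_prop))
      intro p hp; exact hq01 p hp j (le_of_lt hj)
    refine ContinuousOn.clog (hc1.div hc0 ?_) ?_
    · intro p hp; exact h0 _ (hq01 p hp j (le_of_lt hj))
    · intro p hp; exact hslit (hratio p hp j hj)
  · -- exp ∘ L = f
    intro p hp
    rw [hL]
    simp only
    rw [Complex.exp_add, Complex.exp_sum, Complex.exp_log (h0 0 h01)]
    have key : ∀ k : ℕ, k ≤ N →
        f 0 * ∏ j ∈ Finset.range k, Complex.exp (Complex.log (f (q p (j+1)) / f (q p j)))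
          = f (q p k) := by
      intro k hk
      induction k with
      | zero =>
        simp only [Finset.range_zero, Finset.prod_empty, mul_one]
        congr 1
        rw [hq]; simp
      | succ k ih =>
        rw [Finset.prod_range_succ, ← mul_assoc, ih (by omega)]
        rw [Complex.exp_log (div_ne_zero (h0 _ (hq01 p hp (k+1) hk)) (h0 _ (hq01 p hp k (by omega))))]
        rw [mul_comm, div_mul_cancel₀]
        exact h0 _ (hq01 p hp k (by omega))
    have := key N le_rfl
    rw [this, hq]
    simp only
    rw [div_self hN0.ne', one_smul]

lemma complex_core (χ : ℝ) (hχ : 0 < χ) (v : ℂ → ℂ)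
    (hv : ContinuousOn v (Metric.closedBall 0 χ))
    (hv0 : ∀ z ∈ Metric.closedBall (0:ℂ) χ, v z ≠ 0)
    (hvd : ∀ z ∈ Metric.closedBall (0:ℂ) χ, ‖v z - z‖ < χ) : False := by
  set S := Set.Icc (0 : ℝ × ℝ) 1 with hSdef
  set B := Metric.closedBall (0:ℂ) χ with hBdef
  -- the circle point
  set e : ℝ → ℂ := fun t => Complex.exp ((2 * Real.pi * t : ℝ) * Complex.I) with he
  have hnorme : ∀ t, ‖e t‖ = 1 := fun t => Complex.norm_exp_ofReal_mul_I _
  set c : ℝ × ℝ → ℂ := fun p => ((min (2 * p.1) 1 * χ : ℝ) : ℂ) * e p.2 with hc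
  set lam : ℝ × ℝ → ℝ := fun p => max (2 * p.1 - 1) 0 with hlam
  set H : ℝ × ℝ → ℂ := fun p =>
      (1 - (lam p : ℂ)) * v (c p) + (lam p : ℂ) * c p with hH
  have hmemS : ∀ p : ℝ × ℝ, p ∈ S → 0 ≤ p.1 ∧ p.1 ≤ 1 ∧ 0 ≤ p.2 ∧ p.2 ≤ 1 := by
    intro p hp
    rw [hSdef, Set.mem_Icc, Prod.le_def, Prod.le_def] at hp
    exact ⟨hp.1.1, hp.2.1, hp.1.2, hp.2.2⟩
  have hmemS' : ∀ p : ℝ × ℝ, 0 ≤ p.1 → p.1 ≤ 1 → 0 ≤ p.2 → p.2 ≤ 1 → p ∈ S := by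
    intro p h1 h2 h3 h4
    rw [hSdef, Set.mem_Icc, Prod.le_def, Prod.le_def]
    exact ⟨⟨h1, h3⟩, h2, h4⟩
  have hnormc : ∀ p : ℝ × ℝ, ‖c p‖ = |min (2 * p.1) 1 * χ| := by
    intro p
    rw [hc]
    simp only
    rw [norm_mul, hnorme, mul_one, Complex.norm_real, Real.norm_eq_abs]
  have hcB : ∀ p ∈ S, c p ∈ B := by
    intro p hp
    obtain ⟨h1, h2, -, -⟩ := hmemS p hp
    rw [hBdef, Metric.mem_closedBall, dist_zero_right, hnormc]
    rw [_root_.abs_of_nonneg (by positivity)]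
    have : min (2 * p.1) 1 ≤ 1 := min_le_right _ _
    nlinarith
  have hlam01 : ∀ p ∈ S, 0 ≤ lam p ∧ lam p ≤ 1 := by
    intro p hp
    obtain ⟨h1, h2, -, -⟩ := hmemS p hp
    exact ⟨le_max_right _ _, max_le (by linarith) (by linarith)⟩
  -- H is nonvanishing on S
  have hHne : ∀ p ∈ S, H p ≠ 0 := by
    intro p hp
    obtain ⟨h1, h2, -, -⟩ := hmemS p hp
    rcases le_or_gt p.1 (1/2) with hle | hlt
    · have hl0 : lam p = 0 := max_eq_right (by linarith)
      rw [hH]; simp only [hl0]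
      simpa using hv0 _ (hcB p hp)
    · have hmin : min (2 * p.1) 1 = 1 := min_eq_right (by linarith)
      have hnc : ‖c p‖ = χ := by
        rw [hnormc, hmin, one_mul, _root_.abs_of_pos hχ]
      have hd := hvd (c p) (hcB p hp)
      obtain ⟨hl0, hl1⟩ := hlam01 p hp
      intro heq
      have hrw : c p = -((1 - (lam p : ℂ)) * (v (c p) - c p)) := by
        have h' : (1 - (lam p : ℂ)) * v (c p) + (lam p : ℂ) * c p = 0 := heq
        linear_combination h'
      have hn1 : ‖(1 : ℂ) - (lam p : ℂ)‖ = 1 - lam p := by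
        rw [show (1 : ℂ) - (lam p : ℂ) = ((1 - lam p : ℝ) : ℂ) by push_cast; ring,
          Complex.norm_real, Real.norm_eq_abs, _root_.abs_of_nonneg (by linarith)]
      have h2 : χ ≤ ‖v (c p) - c p‖ := by
        calc χ = ‖c p‖ := hnc.symm
          _ = ‖-((1 - (lam p : ℂ)) * (v (c p) - c p))‖ := congrArg norm hrw
          _ = (1 - lam p) * ‖v (c p) - c p‖ := by rw [norm_neg, norm_mul, hn1]
          _ ≤ 1 * ‖v (c p) - c p‖ :=
              mul_le_mul_of_nonneg_right (by linarith) (norm_nonneg _)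
          _ = ‖v (c p) - c p‖ := one_mul _
      linarith
  -- H is continuous on S
  have hHc : ContinuousOn H S := by
    have hcc : Continuous c := by
      rw [hc]
      apply Continuous.mul
      · exact Complex.continuous_ofReal.comp (by fun_prop)
      · exact Complex.continuous_exp.comp (by fun_prop)
    have hvc : ContinuousOn (fun p => v (c p)) S :=
      hv.comp hcc.continuousOn hcB
    have hlc : Continuous fun p : ℝ × ℝ => (lam p : ℂ) :=
      Complex.continuous_ofReal.comp (by fun_prop)
    exact ((continuous_const.sub hlc).continuousOn.mul hvc).add
      (hlc.continuousOn.mul hcc.continuousOn)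
  obtain ⟨L, hLc, hLe⟩ := exists_continuous_log H hHc hHne
  -- boundary values of H
  have hH0 : ∀ t : ℝ, H (0, t) = v 0 := by
    intro t
    rw [hH, hc, hlam]
    simp
  have hH1 : ∀ t : ℝ, t ∈ Set.Icc (0:ℝ) 1 → H (1, t) = (χ : ℂ) * e t := by
    intro t ht
    rw [hH, hc, hlam]
    norm_num
  have hHper : ∀ s : ℝ, H (s, 1) = H (s, 0) := by
    intro s
    have : e 1 = e 0 := by
      rw [he]; simp only [mul_one, mul_zero]
      rw [show ((2 * Real.pi : ℝ) : ℂ) * Complex.I = 2 * Real.pi * Complex.I by push_cast; ring]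
      rw [Complex.exp_two_pi_mul_I]
      simp
    rw [hH, hc, hlam]; simp only [this]
  have hmem1 : ∀ t ∈ Set.Icc (0:ℝ) 1, ((1:ℝ), t) ∈ S := fun t ht =>
    hmemS' _ (by norm_num) (by norm_num) ht.1 ht.2
  have hmem0 : ∀ t ∈ Set.Icc (0:ℝ) 1, ((0:ℝ), t) ∈ S := fun t ht =>
    hmemS' _ (by norm_num) (by norm_num) ht.1 ht.2
  have hmemt : ∀ s ∈ Set.Icc (0:ℝ) 1, ∀ u : ℝ, u ∈ Set.Icc (0:ℝ) 1 → ((s, u) : ℝ × ℝ) ∈ S :=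
    fun s hs u hu => hmemS' _ hs.1 hs.2 hu.1 hu.2
  -- D
  set D : ℝ → ℂ := fun t => L (1, t) - ((Real.log χ : ℂ) + ((2 * Real.pi * t : ℝ) : ℂ) * Complex.I)
    with hD
  have hexpD : ∀ t ∈ Set.Icc (0:ℝ) 1, Complex.exp (D t) = 1 := by
    intro t ht
    rw [hD]
    simp only
    rw [Complex.exp_sub, hLe _ (hmem1 t ht), hH1 t ht, Complex.exp_add]
    rw [← Complex.ofReal_exp, Real.exp_log hχ]
    rw [div_self]
    apply mul_ne_zero
    · exact_mod_cast hχ.ne'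
    · exact Complex.exp_ne_zero _
  have hDc : ContinuousOn D (Set.Icc 0 1) := by
    apply ContinuousOn.sub
    · exact hLc.comp (Continuous.continuousOn (by fun_prop)) (fun t ht => hmem1 t ht)
    · fun_prop
  have hD10 : D 1 = D 0 := const_of_exp_eq_one D hDc hexpD
  -- C : L(0,·) is constant
  have hv0ne : v 0 ≠ 0 := hv0 0 (by rw [hBdef]; simp [hχ.le])
  set C : ℝ → ℂ := fun t => L (0, t) - L (0, 0) with hC
  have hexpC : ∀ t ∈ Set.Icc (0:ℝ) 1, Complex.exp (C t) = 1 := by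
    intro t ht
    rw [hC]
    simp only
    rw [Complex.exp_sub, hLe _ (hmem0 t ht), hLe _ (hmem0 0 (by norm_num)), hH0, hH0, div_self hv0ne]
  have hCc : ContinuousOn C (Set.Icc 0 1) := by
    apply ContinuousOn.sub
    · exact hLc.comp (Continuous.continuousOn (by fun_prop)) (fun t ht => hmem0 t ht)
    · fun_prop
  have hC10 : C 1 = C 0 := const_of_exp_eq_one C hCc hexpC
  have hL0 : L (0, 1) = L (0, 0) := by
    have : C 1 = 0 := by rw [hC10, hC]; simp
    rw [hC] at this; simpa [sub_eq_zero] using this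
  -- E
  set E : ℝ → ℂ := fun s => L (s, 1) - L (s, 0) with hE
  have hexpE : ∀ s ∈ Set.Icc (0:ℝ) 1, Complex.exp (E s) = 1 := by
    intro s hs
    rw [hE]
    simp only
    rw [Complex.exp_sub, hLe _ (hmemt s hs 1 (by norm_num)), hLe _ (hmemt s hs 0 (by norm_num)),
      hHper, div_self (hHne _ (hmemt s hs 0 (by norm_num)))]
  have hEc : ContinuousOn E (Set.Icc 0 1) := by
    apply ContinuousOn.sub
    · exact hLc.comp (Continuous.continuousOn (by fun_prop)) (fun s hs => hmemt s hs 1 (by norm_num))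
    · exact hLc.comp (Continuous.continuousOn (by fun_prop)) (fun s hs => hmemt s hs 0 (by norm_num))
  have hE10 : E 1 = E 0 := const_of_exp_eq_one E hEc hexpE
  have hE0 : E 0 = 0 := by rw [hE]; simpa [sub_eq_zero] using hL0
  -- compute E 1 using D
  have hL1 : ∀ t : ℝ, L (1, t) = D t + ((Real.log χ : ℂ) + ((2 * Real.pi * t : ℝ) : ℂ) * Complex.I) := by
    intro t; rw [hD]; ring
  have hE1 : E 1 = 2 * Real.pi * Complex.I := by
    rw [hE]
    simp only
    rw [hL1 1, hL1 0, hD10]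
    push_cast
    ring
  rw [hE10, hE0] at hE1
  have : (2 * Real.pi : ℝ) = 0 := by
    have := congrArg Complex.im hE1
    simpa using this.symm
  have := Real.pi_pos
  linarith

/-- Topological core of the proof of Lemma 2: if `P` is a point of the triangle `T` at
distance at least `χ > 0` from every point of its frontier, and `g` is continuous on `T`
and moves every point of `T` by less than `χ`, then `P` lies in the image `g(T)`. -/
theorem point_mem_image_of_small_perturbation
    (p₁ p₂ p₃ : EuclideanSpace ℝ (Fin 2))
    (hind : AffineIndependent ℝ ![p₁, p₂, p₃])
    (T : Set (EuclideanSpace ℝ (Fin 2)))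
    (hT : T = convexHull ℝ {p₁, p₂, p₃})
    (χ : ℝ) (hχ : 0 < χ)
    (P : EuclideanSpace ℝ (Fin 2)) (hPT : P ∈ T)
    (hP : ∀ x ∈ frontier T, χ ≤ dist P x)
    (g : EuclideanSpace ℝ (Fin 2) → EuclideanSpace ℝ (Fin 2))
    (hg : ContinuousOn g T)
    (hgd : ∀ x ∈ T, dist x (g x) < χ) :
    P ∈ g '' T := by
  by_contra hc
  -- T is compact
  have hTfin : Set.Finite {p₁, p₂, p₃} :=
    (Set.finite_singleton p₃).insert p₂ |>.insert p₁
  have hTc : IsCompact T := by rw [hT]; exact hTfin.isCompact_convexHull ℝ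
  -- the closed ball of radius χ around P is contained in T
  have hball : Metric.closedBall P χ ⊆ T := by
    obtain ⟨y, hyf, hyd⟩ := hTc.exists_mem_frontier_infDist_compl_eq_dist hPT
    have hinf : χ ≤ Metric.infDist P Tᶜ := by rw [hyd]; exact hP y hyf
    have hopen : Metric.ball P χ ⊆ T := by
      intro z hz
      by_contra hzT
      have := Metric.infDist_le_dist_of_mem (s := Tᶜ) (x := P) hzT
      rw [Metric.mem_ball, dist_comm] at hz
      linarith
    calc Metric.closedBall P χ = closure (Metric.ball P χ) := (closure_ball P hχ.ne').symm
      _ ⊆ closure T := closure_mono hopen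
      _ = T := hTc.isClosed.closure_eq
  -- transfer to ℂ
  set ι : ℂ ≃ₗᵢ[ℝ] EuclideanSpace ℝ (Fin 2) := Complex.orthonormalBasisOneI.repr with hι
  set v : ℂ → ℂ := fun z => ι.symm (g (P + ι z)) - ι.symm P with hv
  have hx : ∀ z ∈ Metric.closedBall (0:ℂ) χ, P + ι z ∈ T := by
    intro z hz
    apply hball
    rw [Metric.mem_closedBall, dist_eq_norm, add_sub_cancel_left, ι.norm_map]
    rw [Metric.mem_closedBall, dist_zero_right] at hz
    exact hz
  apply complex_core χ hχ v
  · -- continuity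
    have h1 : Continuous fun z : ℂ => P + ι z := by
      exact continuous_const.add ι.continuous
    have h2 : ContinuousOn (fun z : ℂ => g (P + ι z)) (Metric.closedBall 0 χ) :=
      hg.comp h1.continuousOn hx
    exact ((ι.symm.continuous.comp_continuousOn h2).sub continuousOn_const)
  · -- nonvanishing
    intro z hz heq
    apply hc
    refine ⟨P + ι z, hx z hz, ?_⟩
    have : ι.symm (g (P + ι z)) = ι.symm P := by
      rw [hv] at heq
      simpa [sub_eq_zero] using heq
    have := ι.symm.injective this
    exact this
  · -- displacement bound
    intro z hz
    have hmem : P + ι z ∈ T := hx z hz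
    have : v z - z = ι.symm (g (P + ι z) - (P + ι z)) := by
      rw [hv]
      simp only
      rw [map_sub, map_add, ι.symm_apply_apply]
      ring
    rw [this, ι.symm.norm_map, ← dist_eq_norm, dist_comm]
    exact hgd _ hmem
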